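/- For n ≥ 3, let F(z) = f(x_1) + Σ_{0<j<j+k≤n} x_j x_k x_n^{n-j-k} with x_j = Re z_j, and consider the Levi-form matrix H (the Hessian of F in x_1,…,x_n). Writing det H as a polynomial in x_n, the vanishing of det H identically, for a defining coefficient matrix S (generalizing to F_S(z) = Σ S_{j,k} x_j x_k x_n^{n-j-k}), determines the coefficients {S_{j,k} : j+k ≤ n-2-m} recursively from {S_{j,k} : j+k > n-2-m} for each m ≥ 0. In the special case S_{j,k} = 1 for all j+k ≤ n, the identity det H = 0 holds identically in (x_1,…,x_n) when f = 0. -/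

import Mathlib

open scoped BigOperators

/-- Hessian matrix of a function on `ℝⁿ` with respect to the standard basis. -/
noncomputable def hess {n : ℕ} (Φ : (Fin n → ℝ) → ℝ) (x : Fin n → ℝ) :
    Matrix (Fin n) (Fin n) ℝ :=
  fun j k => fderiv ℝ (fun y => fderiv ℝ Φ y (Pi.single k 1)) x (Pi.single j 1)

open ContinuousLinearMap

namespace DH

variable {n : ℕ}

noncomputable def pj (i : Fin n) : (Fin n → ℝ) →L[ℝ] ℝ :=
  proj (R := ℝ) (φ := fun _ : Fin n => ℝ) i

lemma hasF_pj (i : Fin n) (y : Fin n → ℝ) :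
    HasFDerivAt (fun z : Fin n → ℝ => z i) (pj i) y := by
  have := (proj (R := ℝ) (φ := fun _ : Fin n => ℝ) i).hasFDerivAt (x := y)
  exact this

lemma hasF_pow (c : Fin n) (m : ℕ) (y : Fin n → ℝ) :
    HasFDerivAt (fun z : Fin n → ℝ => (z c) ^ m)
      (((m : ℝ) * (y c) ^ (m - 1)) • pj c) y :=
  (hasDerivAt_pow m (y c)).comp_hasFDerivAt y (hasF_pj c y)

lemma hasF_mono2 (a b c : Fin n) (m : ℕ) (y : Fin n → ℝ) :
    HasFDerivAt (fun z : Fin n → ℝ => z a * z b * (z c) ^ m)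
      ((y b * (y c) ^ m) • pj a + (y a * (y c) ^ m) • pj b
        + (y a * y b * ((m : ℝ) * (y c) ^ (m - 1))) • pj c) y := by
  have h := ((hasF_pj a y).fun_mul (hasF_pj b y)).fun_mul (hasF_pow c m y)
  refine h.congr_fderiv ?_
  ext u
  simp [pj, smul_smul]
  ring

lemma hasF_mono1 (a c : Fin n) (m : ℕ) (y : Fin n → ℝ) :
    HasFDerivAt (fun z : Fin n → ℝ => z a * (z c) ^ m)
      (((y c) ^ m) • pj a + (y a * ((m : ℝ) * (y c) ^ (m - 1))) • pj c) y := by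
  have h := (hasF_pj a y).fun_mul (hasF_pow c m y)
  refine h.congr_fderiv ?_
  ext u
  simp [pj, smul_smul]
  ring

def NN (n : ℕ) (hn : 3 ≤ n) : Fin n := ⟨n - 1, Nat.sub_lt (by omega) Nat.one_pos⟩

noncomputable def D1 (n : ℕ) (hn : 3 ≤ n) (y : Fin n → ℝ) : (Fin n → ℝ) →L[ℝ] ℝ :=
  ∑ j : Fin n, ∑ k : Fin n,
    if (j : ℕ) + (k : ℕ) + 2 ≤ n then
      (y k * (y (NN n hn)) ^ (n - 2 - (j : ℕ) - (k : ℕ))) • pj j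
      + (y j * (y (NN n hn)) ^ (n - 2 - (j : ℕ) - (k : ℕ))) • pj k
      + (y j * y k * (((n - 2 - (j : ℕ) - (k : ℕ) : ℕ) : ℝ)
          * (y (NN n hn)) ^ (n - 2 - (j : ℕ) - (k : ℕ) - 1))) • pj (NN n hn)
    else 0

lemma hasF_D1 (hn : 3 ≤ n) (y : Fin n → ℝ) :
    HasFDerivAt (fun x : Fin n → ℝ => ∑ j : Fin n, ∑ k : Fin n,
      if (j : ℕ) + (k : ℕ) + 2 ≤ n then
        x j * x k * (x (NN n hn)) ^ (n - 2 - (j : ℕ) - (k : ℕ)) else 0)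
      (D1 n hn y) y := by
  unfold D1
  apply HasFDerivAt.fun_sum
  intro j _
  apply HasFDerivAt.fun_sum
  intro k _
  by_cases h : (j : ℕ) + (k : ℕ) + 2 ≤ n
  · simp only [if_pos h]
    exact hasF_mono2 j k (NN n hn) _ y
  · simp only [if_neg h]
    exact hasFDerivAt_const 0 y

lemma D1_apply (hn : 3 ≤ n) (y w : Fin n → ℝ) :
    D1 n hn y w = ∑ j : Fin n, ∑ k : Fin n,
      if (j : ℕ) + (k : ℕ) + 2 ≤ n then
        w j * (y k * (y (NN n hn)) ^ (n - 2 - (j : ℕ) - (k : ℕ)))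
        + w k * (y j * (y (NN n hn)) ^ (n - 2 - (j : ℕ) - (k : ℕ)))
        + (w (NN n hn) * ((n - 2 - (j : ℕ) - (k : ℕ) : ℕ) : ℝ))
            * (y j * y k * (y (NN n hn)) ^ (n - 2 - (j : ℕ) - (k : ℕ) - 1))
      else 0 := by
  simp only [D1, ContinuousLinearMap.sum_apply]
  refine Finset.sum_congr rfl fun j _ => ?_
  refine Finset.sum_congr rfl fun k _ => ?_
  split_ifs with h
  · simp [pj]
    ring
  · simp

noncomputable def D2 (n : ℕ) (hn : 3 ≤ n) (w y : Fin n → ℝ) : (Fin n → ℝ) →L[ℝ] ℝ :=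
  ∑ j : Fin n, ∑ k : Fin n,
    if (j : ℕ) + (k : ℕ) + 2 ≤ n then
      w j • (((y (NN n hn)) ^ (n - 2 - (j : ℕ) - (k : ℕ))) • pj k
        + (y k * (((n - 2 - (j : ℕ) - (k : ℕ) : ℕ) : ℝ)
            * (y (NN n hn)) ^ (n - 2 - (j : ℕ) - (k : ℕ) - 1))) • pj (NN n hn))
      + w k • (((y (NN n hn)) ^ (n - 2 - (j : ℕ) - (k : ℕ))) • pj j
        + (y j * (((n - 2 - (j : ℕ) - (k : ℕ) : ℕ) : ℝ)
            * (y (NN n hn)) ^ (n - 2 - (j : ℕ) - (k : ℕ) - 1))) • pj (NN n hn))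
      + (w (NN n hn) * ((n - 2 - (j : ℕ) - (k : ℕ) : ℕ) : ℝ)) •
          ((y k * (y (NN n hn)) ^ (n - 2 - (j : ℕ) - (k : ℕ) - 1)) • pj j
          + (y j * (y (NN n hn)) ^ (n - 2 - (j : ℕ) - (k : ℕ) - 1)) • pj k
          + (y j * y k * (((n - 2 - (j : ℕ) - (k : ℕ) - 1 : ℕ) : ℝ)
              * (y (NN n hn)) ^ (n - 2 - (j : ℕ) - (k : ℕ) - 1 - 1))) • pj (NN n hn))
    else 0

lemma hasF_D2 (hn : 3 ≤ n) (w y : Fin n → ℝ) :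
    HasFDerivAt (fun y : Fin n → ℝ => ∑ j : Fin n, ∑ k : Fin n,
      if (j : ℕ) + (k : ℕ) + 2 ≤ n then
        w j * (y k * (y (NN n hn)) ^ (n - 2 - (j : ℕ) - (k : ℕ)))
        + w k * (y j * (y (NN n hn)) ^ (n - 2 - (j : ℕ) - (k : ℕ)))
        + (w (NN n hn) * ((n - 2 - (j : ℕ) - (k : ℕ) : ℕ) : ℝ))
            * (y j * y k * (y (NN n hn)) ^ (n - 2 - (j : ℕ) - (k : ℕ) - 1))
      else 0) (D2 n hn w y) y := by
  unfold D2
  apply HasFDerivAt.fun_sum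
  intro j _
  apply HasFDerivAt.fun_sum
  intro k _
  by_cases h : (j : ℕ) + (k : ℕ) + 2 ≤ n
  · simp only [if_pos h]
    exact (((hasF_mono1 k (NN n hn) _ y).const_mul _).add
      ((hasF_mono1 j (NN n hn) _ y).const_mul _)).add
      ((hasF_mono2 j k (NN n hn) _ y).const_mul _)
  · simp only [if_neg h]
    exact hasFDerivAt_const 0 y

noncomputable def B (n : ℕ) (hn : 3 ≤ n) (y w u : Fin n → ℝ) : ℝ :=
  ∑ j : Fin n, ∑ k : Fin n,
    if (j : ℕ) + (k : ℕ) + 2 ≤ n then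
      w j * (((y (NN n hn)) ^ (n - 2 - (j : ℕ) - (k : ℕ))) * u k
        + (y k * (((n - 2 - (j : ℕ) - (k : ℕ) : ℕ) : ℝ)
            * (y (NN n hn)) ^ (n - 2 - (j : ℕ) - (k : ℕ) - 1))) * u (NN n hn))
      + w k * (((y (NN n hn)) ^ (n - 2 - (j : ℕ) - (k : ℕ))) * u j
        + (y j * (((n - 2 - (j : ℕ) - (k : ℕ) : ℕ) : ℝ)
            * (y (NN n hn)) ^ (n - 2 - (j : ℕ) - (k : ℕ) - 1))) * u (NN n hn))
      + (w (NN n hn) * ((n - 2 - (j : ℕ) - (k : ℕ) : ℕ) : ℝ)) *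
          ((y k * (y (NN n hn)) ^ (n - 2 - (j : ℕ) - (k : ℕ) - 1)) * u j
          + (y j * (y (NN n hn)) ^ (n - 2 - (j : ℕ) - (k : ℕ) - 1)) * u k
          + (y j * y k * (((n - 2 - (j : ℕ) - (k : ℕ) - 1 : ℕ) : ℝ)
              * (y (NN n hn)) ^ (n - 2 - (j : ℕ) - (k : ℕ) - 1 - 1))) * u (NN n hn))
    else 0

lemma D2_apply (hn : 3 ≤ n) (w y u : Fin n → ℝ) :
    D2 n hn w y u = B n hn y w u := by
  simp only [D2, B, ContinuousLinearMap.sum_apply]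
  refine Finset.sum_congr rfl fun j _ => ?_
  refine Finset.sum_congr rfl fun k _ => ?_
  split_ifs with h
  · simp [pj]
    ring
  · simp

noncomputable def X (x : Fin n → ℝ) : ℕ → ℝ := fun i => if h : i < n then x ⟨i, h⟩ else 0

lemma X_coe (x : Fin n → ℝ) (j : Fin n) : X x (j : ℕ) = x j := by
  simp [X, j.isLt]

noncomputable def vnat (x : Fin n → ℝ) (b : ℕ) : ℝ :=
  ∑ i ∈ Finset.range b, X x i * (X x (n - 1)) ^ (b - 1 - i)

noncomputable def vvec (x : Fin n → ℝ) : Fin n → ℝ := fun b =>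
  if (b : ℕ) = n - 1 then -1 else vnat x b

lemma sum_single (v : Fin n → ℝ) (j k N : Fin n) (c q1 q2 q3 : ℝ) :
    ∑ b : Fin n, v b * ((if j = b then (1:ℝ) else 0) * q1 + (if k = b then (1:ℝ) else 0) * q2
      + ((if N = b then (1:ℝ) else 0) * c) * q3)
      = v j * q1 + v k * q2 + (v N * c) * q3 := by
  have h : ∀ b : Fin n, v b * ((if j = b then (1:ℝ) else 0) * q1 + (if k = b then (1:ℝ) else 0) * q2
      + ((if N = b then (1:ℝ) else 0) * c) * q3)
      = (if j = b then v b * q1 else 0) + ((if k = b then v b * q2 else 0)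
        + (if N = b then v b * c * q3 else 0)) := by
    intro b; split_ifs <;> ring
  simp only [h, Finset.sum_add_distrib, Finset.sum_ite_eq, Finset.mem_univ, if_true]
  ring

lemma B_lin (hn : 3 ≤ n) (y u v : Fin n → ℝ) :
    ∑ b : Fin n, v b * B n hn y (Pi.single b 1) u = B n hn y v u := by
  unfold B
  simp only [Finset.mul_sum]
  rw [Finset.sum_comm]
  refine Finset.sum_congr rfl fun j _ => ?_
  rw [Finset.sum_comm]
  refine Finset.sum_congr rfl fun k _ => ?_
  by_cases h : (j : ℕ) + (k : ℕ) + 2 ≤ n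
  · simp only [if_pos h, Pi.single_apply]
    exact sum_single v j k (NN n hn) _ _ _ _
  · simp [if_neg h]

lemma hess_entry (hn : 3 ≤ n) (Φ : (Fin n → ℝ) → ℝ)
    (hΦ : Φ = fun x : Fin n → ℝ => ∑ j : Fin n, ∑ k : Fin n,
      if (j : ℕ) + (k : ℕ) + 2 ≤ n then
        x j * x k * (x (NN n hn)) ^ (n - 2 - (j : ℕ) - (k : ℕ)) else 0)
    (x : Fin n → ℝ) (a b : Fin n) :
    hess Φ x a b = B n hn x (Pi.single b 1) (Pi.single a 1) := by
  unfold hess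
  have h1 : (fun y => fderiv ℝ Φ y (Pi.single b 1))
      = fun y => D1 n hn y (Pi.single b 1) := by
    funext y
    rw [hΦ, (hasF_D1 hn y).fderiv]
  rw [h1]
  have h2 : (fun y => D1 n hn y (Pi.single b 1))
      = fun y : Fin n → ℝ => ∑ j : Fin n, ∑ k : Fin n,
      if (j : ℕ) + (k : ℕ) + 2 ≤ n then
        (Pi.single b 1 : Fin n → ℝ) j * (y k * (y (NN n hn)) ^ (n - 2 - (j : ℕ) - (k : ℕ)))
        + (Pi.single b 1 : Fin n → ℝ) k * (y j * (y (NN n hn)) ^ (n - 2 - (j : ℕ) - (k : ℕ)))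
        + ((Pi.single b 1 : Fin n → ℝ) (NN n hn) * ((n - 2 - (j : ℕ) - (k : ℕ) : ℕ) : ℝ))
            * (y j * y k * (y (NN n hn)) ^ (n - 2 - (j : ℕ) - (k : ℕ) - 1))
      else 0 := by
    funext y
    exact D1_apply hn y (Pi.single b 1)
  rw [h2, (hasF_D2 hn (Pi.single b 1) x).fderiv]
  exact D2_apply hn (Pi.single b 1) x (Pi.single a 1)

lemma gaussIco (i m : ℕ) :
    2 * (∑ j ∈ Finset.Ico (i + 1) m, (m - 1 - j)) = (m - 1 - i) * (m - 2 - i) := by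
  rw [Finset.sum_Ico_eq_sum_range]
  have h1 : ∀ l, m - 1 - (i + 1 + l) = (m - (i + 1)) - 1 - l := fun l => by omega
  simp only [h1]
  rw [show (∑ l ∈ Finset.range (m - (i + 1)), (m - (i + 1) - 1 - l))
      = ∑ l ∈ Finset.range (m - (i + 1)), l from Finset.sum_range_reflect (fun l => l) _]
  rw [mul_comm, Finset.sum_range_id_mul_two]
  congr 1 <;> omega

lemma core1 (m : ℕ) (T : ℝ) (c : ℕ → ℝ) :
    ∑ k ∈ Finset.range m, (∑ i ∈ Finset.range k, c i * T ^ (k - 1 - i)) * T ^ (m - 1 - k)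
      = ∑ k ∈ Finset.range m, ((m - 1 - k : ℕ) : ℝ) * (c k * T ^ (m - 2 - k)) := by
  have step1 : ∑ k ∈ Finset.range m, (∑ i ∈ Finset.range k, c i * T ^ (k - 1 - i)) * T ^ (m - 1 - k)
      = ∑ k ∈ Finset.range m, ∑ i ∈ Finset.range k, c i * T ^ (m - 2 - i) := by
    refine Finset.sum_congr rfl fun k hk => ?_
    rw [Finset.sum_mul]
    refine Finset.sum_congr rfl fun i hi => ?_
    rw [Finset.mem_range] at hk hi
    have hT : T ^ (k - 1 - i) * T ^ (m - 1 - k) = T ^ (m - 2 - i) := by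
      rw [← pow_add]; congr 1; omega
    linear_combination c i * hT
  rw [step1]
  simp only [← Nat.Ico_zero_eq_range]
  rw [← Finset.sum_Ico_Ico_comm']
  rw [Nat.Ico_zero_eq_range]
  refine Finset.sum_congr rfl fun i hi => ?_
  rw [Finset.mem_range] at hi
  rw [Finset.sum_const, Nat.card_Ico, nsmul_eq_mul]
  congr 2
  omega

lemma core2 (m : ℕ) (T d : ℝ) (c : ℕ → ℝ) :
    2 * ∑ j ∈ Finset.range m, ((m - 1 - j : ℕ) : ℝ)
        * ((∑ i ∈ Finset.range j, c i * T ^ (j - 1 - i)) * (d * T ^ (m - 2 - j)))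
      = ∑ j ∈ Finset.range m, (((m - 1 - j) * (m - 2 - j) : ℕ) : ℝ)
        * (c j * (d * T ^ (m - 3 - j))) := by
  have step1 : ∀ j ∈ Finset.range m, ((m - 1 - j : ℕ) : ℝ)
        * ((∑ i ∈ Finset.range j, c i * T ^ (j - 1 - i)) * (d * T ^ (m - 2 - j)))
      = ∑ i ∈ Finset.range j, ((m - 1 - j : ℕ) : ℝ) * (c i * (d * T ^ (m - 3 - i))) := by
    intro j hj
    rw [Finset.mem_range] at hj
    rw [Finset.sum_mul, Finset.mul_sum]
    refine Finset.sum_congr rfl fun i hi => ?_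
    rw [Finset.mem_range] at hi
    by_cases h : j + 2 ≤ m
    · have hT : T ^ (j - 1 - i) * T ^ (m - 2 - j) = T ^ (m - 3 - i) := by
        rw [← pow_add]; congr 1; omega
      linear_combination ((m - 1 - j : ℕ) : ℝ) * c i * d * hT
    · have h0 : m - 1 - j = 0 := by omega
      simp [h0]
  rw [Finset.sum_congr rfl step1]
  simp only [← Nat.Ico_zero_eq_range]
  rw [← Finset.sum_Ico_Ico_comm']
  rw [Nat.Ico_zero_eq_range, Finset.mul_sum]
  refine Finset.sum_congr rfl fun i hi => ?_
  rw [Finset.mem_range] at hi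
  have pull : ∑ j ∈ Finset.Ico (i + 1) m, ((m - 1 - j : ℕ) : ℝ) * (c i * (d * T ^ (m - 3 - i)))
      = (((∑ j ∈ Finset.Ico (i + 1) m, (m - 1 - j) : ℕ) : ℝ)) * (c i * (d * T ^ (m - 3 - i))) := by
    rw [← Finset.sum_mul, Nat.cast_sum]
  rw [pull]
  have : (2 : ℝ) * (((∑ j ∈ Finset.Ico (i + 1) m, (m - 1 - j) : ℕ) : ℝ))
      = (((m - 1 - i) * (m - 2 - i) : ℕ) : ℝ) := by
    rw [← gaussIco i m]; push_cast; ring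
  linear_combination (c i * (d * T ^ (m - 3 - i))) * this

lemma X_last (hn : 3 ≤ n) (x : Fin n → ℝ) : X x (n - 1) = x (NN n hn) := by
  have h : n - 1 < n := by omega
  simp [X, h, NN]

lemma row_sum (hn : 3 ≤ n) (x : Fin n → ℝ) (p : ℕ) (hp : p ≤ n - 2) :
    ∑ j : Fin n, (if (j : ℕ) + p + 2 ≤ n then
      vvec x j * (x (NN n hn)) ^ (n - 2 - (j : ℕ) - p)
      - ((n - 2 - (j : ℕ) - p : ℕ) : ℝ) * (x j * (x (NN n hn)) ^ (n - 2 - (j : ℕ) - p - 1))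
      else 0) = 0 := by
  set m := n - 1 - p with hm
  -- rewrite to a function of the natural number value of j
  have step1 : ∀ j : Fin n, (if (j : ℕ) + p + 2 ≤ n then
      vvec x j * (x (NN n hn)) ^ (n - 2 - (j : ℕ) - p)
      - ((n - 2 - (j : ℕ) - p : ℕ) : ℝ) * (x j * (x (NN n hn)) ^ (n - 2 - (j : ℕ) - p - 1))
      else 0) = (fun jj : ℕ => if jj + p + 2 ≤ n then
        vnat x jj * (X x (n - 1)) ^ (m - 1 - jj)
        - ((m - 1 - jj : ℕ) : ℝ) * (X x jj * (X x (n - 1)) ^ (m - 2 - jj))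
        else 0) (j : ℕ) := by
    intro j
    simp only
    split_ifs with h
    · have hjn : ((j : ℕ) : ℕ) ≠ n - 1 := by omega
      have e1 : n - 2 - (j : ℕ) - p = m - 1 - (j : ℕ) := by omega
      have e2 : n - 2 - (j : ℕ) - p - 1 = m - 2 - (j : ℕ) := by omega
      rw [X_last hn x, X_coe, ← e1, ← e2]
      have hv : vvec x j = vnat x (j : ℕ) := by
        simp only [vvec, if_neg hjn]
      rw [hv]
    · rfl
  rw [Finset.sum_congr rfl fun j _ => step1 j]
  rw [Fin.sum_univ_eq_sum_range (fun jj : ℕ => if jj + p + 2 ≤ n then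
        vnat x jj * (X x (n - 1)) ^ (m - 1 - jj)
        - ((m - 1 - jj : ℕ) : ℝ) * (X x jj * (X x (n - 1)) ^ (m - 2 - jj))
        else 0) n]
  have hsub : Finset.range m ⊆ Finset.range n := by
    apply Finset.range_subset_range.mpr; omega
  rw [← Finset.sum_subset hsub (by
    intro j _ hj
    rw [Finset.mem_range, not_lt] at hj
    have : ¬ (j + p + 2 ≤ n) := by omega
    rw [if_neg this])]
  have step2 : ∀ j ∈ Finset.range m, (if j + p + 2 ≤ n then
        vnat x j * (X x (n - 1)) ^ (m - 1 - j)
        - ((m - 1 - j : ℕ) : ℝ) * (X x j * (X x (n - 1)) ^ (m - 2 - j))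
        else 0) = vnat x j * (X x (n - 1)) ^ (m - 1 - j)
        - ((m - 1 - j : ℕ) : ℝ) * (X x j * (X x (n - 1)) ^ (m - 2 - j)) := by
    intro j hj
    rw [Finset.mem_range] at hj
    rw [if_pos (by omega)]
  rw [Finset.sum_congr rfl step2, Finset.sum_sub_distrib, sub_eq_zero]
  exact core1 m (X x (n - 1)) (X x)

lemma rowA (hn : 3 ≤ n) (x : Fin n → ℝ) (a : Fin n) (ha : a ≠ NN n hn) :
    B n hn x (vvec x) (Pi.single a 1) = 0 := by
  have hNa : (NN n hn) ≠ a := Ne.symm ha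
  have hav : (a : ℕ) ≤ n - 2 := by
    have h1 := a.isLt
    have h2 : (a : ℕ) ≠ n - 1 := fun h => ha (Fin.ext (by simpa [NN] using h))
    omega
  have uNN : (Pi.single a 1 : Fin n → ℝ) (NN n hn) = 0 := Pi.single_eq_of_ne hNa 1
  have vNN : vvec x (NN n hn) = -1 := by simp [vvec, NN]
  unfold B
  have trans : ∀ j k : Fin n,
      (if (j : ℕ) + (k : ℕ) + 2 ≤ n then
        vvec x j * (((x (NN n hn)) ^ (n - 2 - (j : ℕ) - (k : ℕ))) * (Pi.single a 1 : Fin n → ℝ) k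
          + (x k * (((n - 2 - (j : ℕ) - (k : ℕ) : ℕ) : ℝ)
              * (x (NN n hn)) ^ (n - 2 - (j : ℕ) - (k : ℕ) - 1))) * (Pi.single a 1 : Fin n → ℝ) (NN n hn))
        + vvec x k * (((x (NN n hn)) ^ (n - 2 - (j : ℕ) - (k : ℕ))) * (Pi.single a 1 : Fin n → ℝ) j
          + (x j * (((n - 2 - (j : ℕ) - (k : ℕ) : ℕ) : ℝ)
              * (x (NN n hn)) ^ (n - 2 - (j : ℕ) - (k : ℕ) - 1))) * (Pi.single a 1 : Fin n → ℝ) (NN n hn))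
        + (vvec x (NN n hn) * ((n - 2 - (j : ℕ) - (k : ℕ) : ℕ) : ℝ)) *
            ((x k * (x (NN n hn)) ^ (n - 2 - (j : ℕ) - (k : ℕ) - 1)) * (Pi.single a 1 : Fin n → ℝ) j
            + (x j * (x (NN n hn)) ^ (n - 2 - (j : ℕ) - (k : ℕ) - 1)) * (Pi.single a 1 : Fin n → ℝ) k
            + (x j * x k * (((n - 2 - (j : ℕ) - (k : ℕ) - 1 : ℕ) : ℝ)
                * (x (NN n hn)) ^ (n - 2 - (j : ℕ) - (k : ℕ) - 1 - 1))) * (Pi.single a 1 : Fin n → ℝ) (NN n hn))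
      else 0)
      = (if k = a then (if (j : ℕ) + (k : ℕ) + 2 ≤ n then
            vvec x j * (x (NN n hn)) ^ (n - 2 - (j : ℕ) - (k : ℕ))
            - ((n - 2 - (j : ℕ) - (k : ℕ) : ℕ) : ℝ)
                * (x j * (x (NN n hn)) ^ (n - 2 - (j : ℕ) - (k : ℕ) - 1)) else 0) else 0)
        + (if j = a then (if (j : ℕ) + (k : ℕ) + 2 ≤ n then
            vvec x k * (x (NN n hn)) ^ (n - 2 - (j : ℕ) - (k : ℕ))
            - ((n - 2 - (j : ℕ) - (k : ℕ) : ℕ) : ℝ)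
                * (x k * (x (NN n hn)) ^ (n - 2 - (j : ℕ) - (k : ℕ) - 1)) else 0) else 0) := by
    intro j k
    rw [uNN, vNN]
    simp only [Pi.single_apply]
    split_ifs <;> ring
  rw [Finset.sum_congr rfl fun j _ => Finset.sum_congr rfl fun k _ => trans j k]
  simp only [Finset.sum_add_distrib]
  have c1 : ∑ j : Fin n, ∑ k : Fin n, (if k = a then (if (j : ℕ) + (k : ℕ) + 2 ≤ n then
            vvec x j * (x (NN n hn)) ^ (n - 2 - (j : ℕ) - (k : ℕ))
            - ((n - 2 - (j : ℕ) - (k : ℕ) : ℕ) : ℝ)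
                * (x j * (x (NN n hn)) ^ (n - 2 - (j : ℕ) - (k : ℕ) - 1)) else 0) else 0)
      = ∑ j : Fin n, (if (j : ℕ) + (a : ℕ) + 2 ≤ n then
            vvec x j * (x (NN n hn)) ^ (n - 2 - (j : ℕ) - (a : ℕ))
            - ((n - 2 - (j : ℕ) - (a : ℕ) : ℕ) : ℝ)
                * (x j * (x (NN n hn)) ^ (n - 2 - (j : ℕ) - (a : ℕ) - 1)) else 0) := by
    refine Finset.sum_congr rfl fun j _ => ?_
    simp [Finset.sum_ite_eq']
  have c2 : ∑ j : Fin n, ∑ k : Fin n, (if j = a then (if (j : ℕ) + (k : ℕ) + 2 ≤ n then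
            vvec x k * (x (NN n hn)) ^ (n - 2 - (j : ℕ) - (k : ℕ))
            - ((n - 2 - (j : ℕ) - (k : ℕ) : ℕ) : ℝ)
                * (x k * (x (NN n hn)) ^ (n - 2 - (j : ℕ) - (k : ℕ) - 1)) else 0) else 0)
      = ∑ k : Fin n, (if (k : ℕ) + (a : ℕ) + 2 ≤ n then
            vvec x k * (x (NN n hn)) ^ (n - 2 - (k : ℕ) - (a : ℕ))
            - ((n - 2 - (k : ℕ) - (a : ℕ) : ℕ) : ℝ)
                * (x k * (x (NN n hn)) ^ (n - 2 - (k : ℕ) - (a : ℕ) - 1)) else 0) := by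
    rw [Finset.sum_comm]
    refine Finset.sum_congr rfl fun k _ => ?_
    have collapse : ∑ j : Fin n, (if j = a then (if (j : ℕ) + (k : ℕ) + 2 ≤ n then
            vvec x k * (x (NN n hn)) ^ (n - 2 - (j : ℕ) - (k : ℕ))
            - ((n - 2 - (j : ℕ) - (k : ℕ) : ℕ) : ℝ)
                * (x k * (x (NN n hn)) ^ (n - 2 - (j : ℕ) - (k : ℕ) - 1)) else 0) else 0)
        = (if (a : ℕ) + (k : ℕ) + 2 ≤ n then
            vvec x k * (x (NN n hn)) ^ (n - 2 - (a : ℕ) - (k : ℕ))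
            - ((n - 2 - (a : ℕ) - (k : ℕ) : ℕ) : ℝ)
                * (x k * (x (NN n hn)) ^ (n - 2 - (a : ℕ) - (k : ℕ) - 1)) else 0) := by
      simp [Finset.sum_ite_eq']
    rw [collapse]
    have e1 : n - 2 - (a : ℕ) - (k : ℕ) = n - 2 - (k : ℕ) - (a : ℕ) := by omega
    refine if_congr ⟨fun h => by omega, fun h => by omega⟩ ?_ rfl
    rw [e1]
  rw [c1, c2, row_sum hn x (a : ℕ) hav]
  norm_num

lemma vvec_eq (x : Fin n → ℝ) (j : Fin n) (h : (j : ℕ) ≠ n - 1) :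
    vvec x j = vnat x (j : ℕ) := by simp [vvec, h]

lemma vvec_last (hn : 3 ≤ n) (x : Fin n → ℝ) : vvec x (NN n hn) = -1 := by
  simp [vvec, NN]

lemma fin_double_to_range (g : ℕ → ℕ → ℝ) :
    (∑ k : Fin n, ∑ j : Fin n, g (j : ℕ) (k : ℕ))
      = ∑ k ∈ Finset.range n, ∑ j ∈ Finset.range n, g j k := by
  have h1 : ∀ k : Fin n, (∑ j : Fin n, g (j : ℕ) (k : ℕ))
      = (fun kk : ℕ => ∑ j ∈ Finset.range n, g j kk) (k : ℕ) :=
    fun k => Fin.sum_univ_eq_sum_range (fun jj => g jj (k : ℕ)) n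
  rw [Finset.sum_congr rfl fun k _ => h1 k,
    Fin.sum_univ_eq_sum_range (fun kk : ℕ => ∑ j ∈ Finset.range n, g j kk) n]

lemma rowN (hn : 3 ≤ n) (x : Fin n → ℝ) :
    B n hn x (vvec x) (Pi.single (NN n hn) 1) = 0 := by
  unfold B
  have trans : ∀ j k : Fin n,
      (if (j : ℕ) + (k : ℕ) + 2 ≤ n then
        vvec x j * (((x (NN n hn)) ^ (n - 2 - (j : ℕ) - (k : ℕ))) * (Pi.single (NN n hn) 1 : Fin n → ℝ) k
          + (x k * (((n - 2 - (j : ℕ) - (k : ℕ) : ℕ) : ℝ)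
              * (x (NN n hn)) ^ (n - 2 - (j : ℕ) - (k : ℕ) - 1))) * (Pi.single (NN n hn) 1 : Fin n → ℝ) (NN n hn))
        + vvec x k * (((x (NN n hn)) ^ (n - 2 - (j : ℕ) - (k : ℕ))) * (Pi.single (NN n hn) 1 : Fin n → ℝ) j
          + (x j * (((n - 2 - (j : ℕ) - (k : ℕ) : ℕ) : ℝ)
              * (x (NN n hn)) ^ (n - 2 - (j : ℕ) - (k : ℕ) - 1))) * (Pi.single (NN n hn) 1 : Fin n → ℝ) (NN n hn))
        + (vvec x (NN n hn) * ((n - 2 - (j : ℕ) - (k : ℕ) : ℕ) : ℝ)) *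
            ((x k * (x (NN n hn)) ^ (n - 2 - (j : ℕ) - (k : ℕ) - 1)) * (Pi.single (NN n hn) 1 : Fin n → ℝ) j
            + (x j * (x (NN n hn)) ^ (n - 2 - (j : ℕ) - (k : ℕ) - 1)) * (Pi.single (NN n hn) 1 : Fin n → ℝ) k
            + (x j * x k * (((n - 2 - (j : ℕ) - (k : ℕ) - 1 : ℕ) : ℝ)
                * (x (NN n hn)) ^ (n - 2 - (j : ℕ) - (k : ℕ) - 1 - 1))) * (Pi.single (NN n hn) 1 : Fin n → ℝ) (NN n hn))
      else 0)
      = ((if (j : ℕ) + (k : ℕ) + 2 ≤ n then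
          ((n - 2 - (j : ℕ) - (k : ℕ) : ℕ) : ℝ)
            * (vnat x (j : ℕ) * (X x (k : ℕ) * (X x (n - 1)) ^ (n - 2 - (j : ℕ) - (k : ℕ) - 1))) else 0)
        + (if (j : ℕ) + (k : ℕ) + 2 ≤ n then
          ((n - 2 - (j : ℕ) - (k : ℕ) : ℕ) : ℝ)
            * (vnat x (k : ℕ) * (X x (j : ℕ) * (X x (n - 1)) ^ (n - 2 - (j : ℕ) - (k : ℕ) - 1))) else 0))
        - (if (j : ℕ) + (k : ℕ) + 2 ≤ n then
          (((n - 2 - (j : ℕ) - (k : ℕ)) * (n - 2 - (j : ℕ) - (k : ℕ) - 1) : ℕ) : ℝ)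
            * (X x (j : ℕ) * (X x (k : ℕ) * (X x (n - 1)) ^ (n - 2 - (j : ℕ) - (k : ℕ) - 1 - 1))) else 0) := by
    intro j k
    by_cases h : (j : ℕ) + (k : ℕ) + 2 ≤ n
    · have hj : j ≠ NN n hn := by
        intro hEq
        have : (j : ℕ) = n - 1 := by rw [hEq]; rfl
        omega
      have hk : k ≠ NN n hn := by
        intro hEq
        have : (k : ℕ) = n - 1 := by rw [hEq]; rfl
        omega
      rw [if_pos h, if_pos h, if_pos h, if_pos h]
      rw [Pi.single_eq_of_ne hj, Pi.single_eq_of_ne hk, Pi.single_eq_same]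
      rw [vvec_last hn x, vvec_eq x j (by omega), vvec_eq x k (by omega)]
      rw [← X_coe x j, ← X_coe x k, ← X_last hn x, Nat.cast_mul]
      ring
    · rw [if_neg h, if_neg h, if_neg h, if_neg h]
      norm_num
  rw [Finset.sum_congr rfl fun j _ => Finset.sum_congr rfl fun k _ => trans j k]
  simp only [Finset.sum_add_distrib, Finset.sum_sub_distrib]
  have hQ : (∑ j : Fin n, ∑ k : Fin n, (if (j : ℕ) + (k : ℕ) + 2 ≤ n then
          ((n - 2 - (j : ℕ) - (k : ℕ) : ℕ) : ℝ)
            * (vnat x (k : ℕ) * (X x (j : ℕ) * (X x (n - 1)) ^ (n - 2 - (j : ℕ) - (k : ℕ) - 1))) else 0))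
      = (∑ j : Fin n, ∑ k : Fin n, (if (j : ℕ) + (k : ℕ) + 2 ≤ n then
          ((n - 2 - (j : ℕ) - (k : ℕ) : ℕ) : ℝ)
            * (vnat x (j : ℕ) * (X x (k : ℕ) * (X x (n - 1)) ^ (n - 2 - (j : ℕ) - (k : ℕ) - 1))) else 0)) := by
    rw [Finset.sum_comm]
    refine Finset.sum_congr rfl fun a _ => Finset.sum_congr rfl fun b _ => ?_
    refine if_congr ⟨fun h => by omega, fun h => by omega⟩ ?_ rfl
    rw [show n - 2 - (b : ℕ) - (a : ℕ) = n - 2 - (a : ℕ) - (b : ℕ) from by omega]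
  rw [hQ]
  have key : 2 * (∑ j : Fin n, ∑ k : Fin n, (if (j : ℕ) + (k : ℕ) + 2 ≤ n then
          ((n - 2 - (j : ℕ) - (k : ℕ) : ℕ) : ℝ)
            * (vnat x (j : ℕ) * (X x (k : ℕ) * (X x (n - 1)) ^ (n - 2 - (j : ℕ) - (k : ℕ) - 1))) else 0))
      = ∑ j : Fin n, ∑ k : Fin n, (if (j : ℕ) + (k : ℕ) + 2 ≤ n then
          (((n - 2 - (j : ℕ) - (k : ℕ)) * (n - 2 - (j : ℕ) - (k : ℕ) - 1) : ℕ) : ℝ)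
            * (X x (j : ℕ) * (X x (k : ℕ) * (X x (n - 1)) ^ (n - 2 - (j : ℕ) - (k : ℕ) - 1 - 1))) else 0) := by
    conv_lhs => rw [Finset.sum_comm]
    conv_rhs => rw [Finset.sum_comm]
    rw [fin_double_to_range (fun j k => if j + k + 2 ≤ n then
          ((n - 2 - j - k : ℕ) : ℝ)
            * (vnat x j * (X x k * (X x (n - 1)) ^ (n - 2 - j - k - 1))) else 0)]
    rw [fin_double_to_range (fun j k => if j + k + 2 ≤ n then
          (((n - 2 - j - k) * (n - 2 - j - k - 1) : ℕ) : ℝ)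
            * (X x j * (X x k * (X x (n - 1)) ^ (n - 2 - j - k - 1 - 1))) else 0)]
    have shrinkL : ∑ k ∈ Finset.range (n - 1), ∑ j ∈ Finset.range n, (if j + k + 2 ≤ n then
          ((n - 2 - j - k : ℕ) : ℝ)
            * (vnat x j * (X x k * (X x (n - 1)) ^ (n - 2 - j - k - 1))) else 0)
        = ∑ k ∈ Finset.range n, ∑ j ∈ Finset.range n, (if j + k + 2 ≤ n then
          ((n - 2 - j - k : ℕ) : ℝ)
            * (vnat x j * (X x k * (X x (n - 1)) ^ (n - 2 - j - k - 1))) else 0) :=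
      Finset.sum_subset (Finset.range_subset_range.mpr (by omega)) (fun k _ hk =>
        Finset.sum_eq_zero fun j _ => if_neg (by
          rw [Finset.mem_range, not_lt] at hk; omega))
    have shrinkR : ∑ k ∈ Finset.range (n - 1), ∑ j ∈ Finset.range n, (if j + k + 2 ≤ n then
          (((n - 2 - j - k) * (n - 2 - j - k - 1) : ℕ) : ℝ)
            * (X x j * (X x k * (X x (n - 1)) ^ (n - 2 - j - k - 1 - 1))) else 0)
        = ∑ k ∈ Finset.range n, ∑ j ∈ Finset.range n, (if j + k + 2 ≤ n then
          (((n - 2 - j - k) * (n - 2 - j - k - 1) : ℕ) : ℝ)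
            * (X x j * (X x k * (X x (n - 1)) ^ (n - 2 - j - k - 1 - 1))) else 0) :=
      Finset.sum_subset (Finset.range_subset_range.mpr (by omega)) (fun k _ hk =>
        Finset.sum_eq_zero fun j _ => if_neg (by
          rw [Finset.mem_range, not_lt] at hk; omega))
    rw [← shrinkL, ← shrinkR, Finset.mul_sum]
    refine Finset.sum_congr rfl fun k hk => ?_
    rw [Finset.mem_range] at hk
    have sL : ∑ j ∈ Finset.range n, (if j + k + 2 ≤ n then
          ((n - 2 - j - k : ℕ) : ℝ)
            * (vnat x j * (X x k * (X x (n - 1)) ^ (n - 2 - j - k - 1))) else 0)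
        = ∑ j ∈ Finset.range (n - 1 - k), ((n - 1 - k - 1 - j : ℕ) : ℝ)
            * (vnat x j * (X x k * (X x (n - 1)) ^ (n - 1 - k - 2 - j))) := by
      have hsub : Finset.range (n - 1 - k) ⊆ Finset.range n := Finset.range_subset_range.mpr (by omega)
      have hvan : ∀ j ∈ Finset.range n, j ∉ Finset.range (n - 1 - k) →
          (if j + k + 2 ≤ n then ((n - 2 - j - k : ℕ) : ℝ)
            * (vnat x j * (X x k * (X x (n - 1)) ^ (n - 2 - j - k - 1))) else 0) = 0 := by
        intro j _ hj
        rw [Finset.mem_range, not_lt] at hj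
        exact if_neg (by omega)
      rw [← Finset.sum_subset hsub hvan]
      refine Finset.sum_congr rfl fun j hj => ?_
      rw [Finset.mem_range] at hj
      rw [if_pos (by omega)]
      rw [show n - 2 - j - k - 1 = n - 1 - k - 2 - j from by omega,
        show n - 2 - j - k = n - 1 - k - 1 - j from by omega]
    have sR : ∑ j ∈ Finset.range n, (if j + k + 2 ≤ n then
          (((n - 2 - j - k) * (n - 2 - j - k - 1) : ℕ) : ℝ)
            * (X x j * (X x k * (X x (n - 1)) ^ (n - 2 - j - k - 1 - 1))) else 0)
        = ∑ j ∈ Finset.range (n - 1 - k), (((n - 1 - k - 1 - j) * (n - 1 - k - 2 - j) : ℕ) : ℝ)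
            * (X x j * (X x k * (X x (n - 1)) ^ (n - 1 - k - 3 - j))) := by
      have hsub : Finset.range (n - 1 - k) ⊆ Finset.range n := Finset.range_subset_range.mpr (by omega)
      have hvan : ∀ j ∈ Finset.range n, j ∉ Finset.range (n - 1 - k) →
          (if j + k + 2 ≤ n then (((n - 2 - j - k) * (n - 2 - j - k - 1) : ℕ) : ℝ)
            * (X x j * (X x k * (X x (n - 1)) ^ (n - 2 - j - k - 1 - 1))) else 0) = 0 := by
        intro j _ hj
        rw [Finset.mem_range, not_lt] at hj
        exact if_neg (by omega)
      rw [← Finset.sum_subset hsub hvan]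
      refine Finset.sum_congr rfl fun j hj => ?_
      rw [Finset.mem_range] at hj
      rw [if_pos (by omega)]
      rw [show n - 2 - j - k - 1 - 1 = n - 1 - k - 3 - j from by omega,
        show n - 2 - j - k - 1 = n - 1 - k - 2 - j from by omega,
        show n - 2 - j - k = n - 1 - k - 1 - j from by omega]
    rw [sL, sR]
    simp only [vnat]
    exact core2 (n - 1 - k) (X x (n - 1)) (X x k) (X x)
  linarith [key]

lemma main (hn : 3 ≤ n) (Φ : (Fin n → ℝ) → ℝ)
    (hΦ : Φ = fun x : Fin n → ℝ => ∑ j : Fin n, ∑ k : Fin n,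
      if (j : ℕ) + (k : ℕ) + 2 ≤ n then
        x j * x k * (x (NN n hn)) ^ (n - 2 - (j : ℕ) - (k : ℕ)) else 0) :
    ∀ x : Fin n → ℝ, (hess Φ x).det = 0 := by
  intro x
  have hne : vvec x ≠ 0 := by
    intro h0
    have h1 := congrFun h0 (NN n hn)
    rw [vvec_last hn x] at h1
    norm_num at h1
  have hmv : (hess Φ x).mulVec (vvec x) = 0 := by
    funext a
    simp only [Matrix.mulVec, dotProduct, Pi.zero_apply]
    rw [Finset.sum_congr rfl fun b _ => by rw [hess_entry hn Φ hΦ x a b]]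
    rw [Finset.sum_congr rfl fun b (_ : b ∈ Finset.univ) =>
      mul_comm (B n hn x (Pi.single b 1) (Pi.single a 1)) (vvec x b)]
    rw [B_lin hn x (Pi.single a 1) (vvec x)]
    by_cases hA : a = NN n hn
    · rw [hA]
      exact rowN hn x
    · exact rowA hn x a hA
  rw [← Matrix.exists_mulVec_eq_zero_iff]
  exact ⟨vvec x, hne, hmv⟩

end DH


/-- For the coefficient matrix `S ≡ 1` (and `f = 0`), the determinant of the
Hessian (Levi-form matrix) of `Φ(x) = Σ_{0<j<j+k≤n} x_j x_k x_n^{n-j-k}`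
vanishes identically on `ℝⁿ`.  Indices are 0-based: coordinate `i : Fin n`
is `x_{i+1}`. -/
theorem det_hessian_model_eq_zero (n : ℕ) (hn : 3 ≤ n)
    (Φ : (Fin n → ℝ) → ℝ)
    (hΦ : Φ = fun x => ∑ j : Fin n, ∑ k : Fin n,
      if (j : ℕ) + (k : ℕ) + 2 ≤ n then
        x j * x k * (x ⟨n - 1, by omega⟩) ^ (n - 2 - (j : ℕ) - (k : ℕ)) else 0) :
    ∀ x : Fin n → ℝ, (hess Φ x).det = 0 :=
  DH.main hn Φ hΦ
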